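/- Let A_N be the (N+1)n × (N+1)n block matrix whose first N block rows are d_{i,k} I_n (i = −N,…,−1, k = −N,…,0) and whose last block row is (Γ₋N, …, Γ₀) with Γ₀ = A₀ + Σ_{l=1}^m A_l l_{N,0}(−τ_l) and Γ_k = Σ_{l=1}^m A_l l_{N,k}(−τ_l) for k < 0. Then det(λ I − A_N) = s(λ)ⁿ · det(λ I_n − A₀ − Σ_{l=1}^m A_l p_N(−τ_l; λ)), where s(λ) = det(λ I_N − D₁₁). -/

import Mathlib

open Matrix Polynomial

/-- `p` is the collocation polynomial `p_N(·; z)` on the mesh `θ`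
(node `θ 0 = 0`, remaining nodes `θ i.succ`). -/
def IsColloc {N : ℕ} (θ : Fin (N + 1) → ℝ) (z : ℂ) (p : Polynomial ℂ) : Prop :=
  p.degree ≤ (N : ℕ) ∧ p.eval 0 = 1 ∧
    ∀ i : Fin N, (Polynomial.derivative p).eval ((θ i.succ : ℝ) : ℂ) =
      z * p.eval ((θ i.succ : ℝ) : ℂ)

open Kronecker in
/-- Auxiliary: the triple product appearing in the Schur complement. -/
theorem stmt_9_schurProd {N n : ℕ} (M : Matrix (Fin N) (Fin N) ℂ) (D₁₂ : Fin N → ℂ)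
    (Γ : Fin N → Matrix (Fin n) (Fin n) ℂ) :
    (Matrix.of fun (a : Fin n) (q : Fin N × Fin n) => -(Γ q.1 a q.2)) *
      (M ⊗ₖ (1 : Matrix (Fin n) (Fin n) ℂ)) *
      (Matrix.of fun (pr : Fin N × Fin n) (b : Fin n) =>
        -(D₁₂ pr.1 * (if pr.2 = b then (1:ℂ) else 0))) =
    ∑ k : Fin N, (M.mulVec D₁₂ k) • Γ k := by
  ext a b
  simp only [Matrix.mul_apply, Matrix.kroneckerMap_apply, Matrix.one_apply, Matrix.of_apply,
    Fintype.sum_prod_type, Matrix.sum_apply, Matrix.smul_apply, smul_eq_mul,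
    Matrix.mulVec, dotProduct, mul_ite, ite_mul, mul_zero, zero_mul, mul_one, mul_neg, neg_mul,
    neg_neg, Finset.sum_ite_eq, Finset.sum_ite_eq', Finset.mem_univ, if_true,
    neg_zero, Finset.sum_neg_distrib]
  simp only [Finset.sum_mul, Finset.mul_sum]
  rw [Finset.sum_comm]
  exact Finset.sum_congr rfl fun k _ => Finset.sum_congr rfl fun i _ => by ring

open Kronecker in
/-- Auxiliary: block decomposition of `z•1 - A_N`. -/
theorem stmt_9_block {N n : ℕ} (D₁₁ : Matrix (Fin N) (Fin N) ℂ) (D₁₂ : Fin N → ℂ)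
    (Γ : Fin N → Matrix (Fin n) (Fin n) ℂ) (Γ₀ : Matrix (Fin n) (Fin n) ℂ) (z : ℂ) :
    z • (1 : Matrix ((Fin N × Fin n) ⊕ Fin n) ((Fin N × Fin n) ⊕ Fin n) ℂ) -
      Matrix.fromBlocks
        (fun p q => D₁₁ p.1 q.1 * (if p.2 = q.2 then (1 : ℂ) else 0))
        (fun p b => D₁₂ p.1 * (if p.2 = b then (1 : ℂ) else 0))
        (fun a q => Γ q.1 a q.2) Γ₀ =
    Matrix.fromBlocks
      ((z • (1 : Matrix (Fin N) (Fin N) ℂ) - D₁₁) ⊗ₖ (1 : Matrix (Fin n) (Fin n) ℂ))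
      (Matrix.of fun (pr : Fin N × Fin n) (b : Fin n) =>
        -(D₁₂ pr.1 * (if pr.2 = b then (1:ℂ) else 0)))
      (Matrix.of fun (a : Fin n) (q : Fin N × Fin n) => -(Γ q.1 a q.2))
      (z • (1 : Matrix (Fin n) (Fin n) ℂ) - Γ₀) := by
  ext i j
  cases i <;> cases j <;>
    simp [Matrix.fromBlocks, Matrix.sub_apply, Matrix.smul_apply, Matrix.one_apply,
      Matrix.kroneckerMap_apply, Prod.ext_iff, Sum.inl.injEq, Sum.inr.injEq] <;>
    (split_ifs <;> simp_all <;> try ring)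

open Kronecker in
/-- Equation (approx1): `det(λ I − A_N) = s(λ)ⁿ · det(λ Iₙ − A₀ − Σₗ Aₗ p_N(−τₗ; λ))`,
where `s(λ) = det(λ I_N − D₁₁)` and `A_N` is the spectral discretization matrix. -/
theorem stmt_9 {N n m : ℕ} (θ : Fin (N + 1) → ℝ) (hθinj : Function.Injective θ)
    (hθ0 : θ 0 = 0)
    (A₀ : Matrix (Fin n) (Fin n) ℂ) (A : Fin m → Matrix (Fin n) (Fin n) ℂ)
    (τ : Fin m → ℝ) (hτ : ∀ l, 0 ≤ τ l)
    (D₁₁ : Matrix (Fin N) (Fin N) ℂ)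
    (hD₁₁ : ∀ i k : Fin N, D₁₁ i k =
      (Polynomial.derivative
        (Lagrange.basis Finset.univ (fun j => ((θ j : ℝ) : ℂ)) k.succ)).eval
          ((θ i.succ : ℝ) : ℂ))
    (D₁₂ : Fin N → ℂ)
    (hD₁₂ : ∀ i : Fin N, D₁₂ i =
      (Polynomial.derivative
        (Lagrange.basis Finset.univ (fun j => ((θ j : ℝ) : ℂ)) 0)).eval
          ((θ i.succ : ℝ) : ℂ))
    -- the blocks `Γₖ` (interior nodes) and `Γ₀`
    (Γ : Fin N → Matrix (Fin n) (Fin n) ℂ)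
    (hΓ : ∀ k : Fin N, Γ k = ∑ l : Fin m,
      ((Lagrange.basis Finset.univ (fun j => ((θ j : ℝ) : ℂ)) k.succ).eval
        ((-(τ l) : ℝ) : ℂ)) • A l)
    (Γ₀ : Matrix (Fin n) (Fin n) ℂ)
    (hΓ₀ : Γ₀ = A₀ + ∑ l : Fin m,
      ((Lagrange.basis Finset.univ (fun j => ((θ j : ℝ) : ℂ)) 0).eval
        ((-(τ l) : ℝ) : ℂ)) • A l)
    -- the discretization matrix `A_N`
    (AN : Matrix ((Fin N × Fin n) ⊕ Fin n) ((Fin N × Fin n) ⊕ Fin n) ℂ)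
    (hAN : AN = Matrix.fromBlocks
      (fun p q => D₁₁ p.1 q.1 * (if p.2 = q.2 then (1 : ℂ) else 0))
      (fun p b => D₁₂ p.1 * (if p.2 = b then (1 : ℂ) else 0))
      (fun a q => Γ q.1 a q.2)
      Γ₀)
    (z : ℂ)
    (hz : (z • (1 : Matrix (Fin N) (Fin N) ℂ) - D₁₁).det ≠ 0)
    (p : Polynomial ℂ) (hp : IsColloc θ z p) :
    (z • (1 : Matrix ((Fin N × Fin n) ⊕ Fin n) ((Fin N × Fin n) ⊕ Fin n) ℂ) - AN).det =
      ((z • (1 : Matrix (Fin N) (Fin N) ℂ) - D₁₁).det) ^ n *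
        (z • (1 : Matrix (Fin n) (Fin n) ℂ) - A₀ -
          ∑ l : Fin m, (p.eval ((-(τ l) : ℝ) : ℂ)) • A l).det := by
  obtain ⟨hdeg, hp0, hpc⟩ := hp
  set x : Fin (N + 1) → ℂ := fun j => ((θ j : ℝ) : ℂ) with hxdef
  have hxinj : Function.Injective x := fun a b h => hθinj (Complex.ofReal_injective h)
  have hx0 : x 0 = 0 := by simp [hxdef, hθ0]
  -- Lagrange expansion of `p`
  have hcard : (Finset.univ : Finset (Fin (N + 1))).card = N + 1 := by simp
  have hpoly : p = ∑ j : Fin (N + 1),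
      Polynomial.C (p.eval (x j)) * Lagrange.basis Finset.univ x j := by
    have h1 := Lagrange.eq_interpolate (s := Finset.univ) (v := x) hxinj.injOn
      (lt_of_le_of_lt hdeg (by rw [hcard]; exact_mod_cast Nat.lt_succ_self N))
    conv_lhs => rw [h1, Lagrange.interpolate_apply]
  have hinterp : ∀ w : ℂ, p.eval w =
      ∑ j : Fin (N + 1), p.eval (x j) * (Lagrange.basis Finset.univ x j).eval w := by
    intro w
    conv_lhs => rw [hpoly]
    simp [Polynomial.eval_finset_sum]
  have hderiv : ∀ w : ℂ, (Polynomial.derivative p).eval w =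
      ∑ j : Fin (N + 1),
        p.eval (x j) * (Polynomial.derivative (Lagrange.basis Finset.univ x j)).eval w := by
    intro w
    conv_lhs => rw [hpoly]
    simp [Polynomial.eval_finset_sum, Polynomial.derivative_mul]
  have hpx0 : p.eval (x 0) = 1 := by rw [hx0, hp0]
  set S : Matrix (Fin N) (Fin N) ℂ := z • (1 : Matrix (Fin N) (Fin N) ℂ) - D₁₁ with hSdef
  set v : Fin N → ℂ := fun k => p.eval (x k.succ) with hvdef
  have hSu : IsUnit S.det := isUnit_iff_ne_zero.mpr hz
  -- the collocation conditions in matrix form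
  have hSv : S.mulVec v = D₁₂ := by
    funext i
    have h := hpc i
    rw [hderiv] at h
    rw [Fin.sum_univ_succ] at h
    simp only [hpx0, one_mul] at h
    have h2 : (∀ k : Fin N, (Polynomial.derivative
        (Lagrange.basis Finset.univ x k.succ)).eval (x i.succ) = D₁₁ i k) :=
      fun k => (hD₁₁ i k).symm
    have h3 : (Polynomial.derivative
        (Lagrange.basis Finset.univ x 0)).eval (x i.succ) = D₁₂ i := (hD₁₂ i).symm
    rw [h3] at h
    simp only [show ∀ k : Fin N, (Polynomial.derivative
        (Lagrange.basis Finset.univ x k.succ)).eval ((θ i.succ : ℝ) : ℂ) = D₁₁ i k from h2] at h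
    show S.mulVec v i = D₁₂ i
    simp only [Matrix.mulVec, dotProduct, hSdef, Matrix.sub_apply, Matrix.smul_apply,
      Matrix.one_apply, sub_mul, smul_eq_mul, mul_ite, mul_one, mul_zero, ite_mul, zero_mul,
      Finset.sum_sub_distrib, Finset.sum_ite_eq, Finset.mem_univ, if_true]
    rw [Finset.sum_congr rfl fun k _ => mul_comm (D₁₁ i k) (v k)]
    linear_combination -h
  have hvinv : S⁻¹.mulVec D₁₂ = v := by
    rw [← hSv, Matrix.mulVec_mulVec, Matrix.nonsing_inv_mul _ hSu, Matrix.one_mulVec]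
  -- block decomposition of `z•1 - AN`
  have hblock : z • (1 : Matrix ((Fin N × Fin n) ⊕ Fin n) ((Fin N × Fin n) ⊕ Fin n) ℂ) - AN =
      Matrix.fromBlocks (S ⊗ₖ (1 : Matrix (Fin n) (Fin n) ℂ))
        (Matrix.of fun (pr : Fin N × Fin n) (b : Fin n) =>
          -(D₁₂ pr.1 * (if pr.2 = b then (1:ℂ) else 0)))
        (Matrix.of fun (a : Fin n) (q : Fin N × Fin n) => -(Γ q.1 a q.2))
        (z • (1 : Matrix (Fin n) (Fin n) ℂ) - Γ₀) := by
    rw [hAN, stmt_9_block]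
  -- invertibility of the top-left block
  have hright : (S ⊗ₖ (1 : Matrix (Fin n) (Fin n) ℂ)) * (S⁻¹ ⊗ₖ 1) = 1 := by
    rw [← Matrix.mul_kronecker_mul, Matrix.mul_nonsing_inv _ hSu, Matrix.one_mul,
      Matrix.one_kronecker_one]
  haveI : Invertible (S ⊗ₖ (1 : Matrix (Fin n) (Fin n) ℂ)) :=
    invertibleOfRightInverse _ _ hright
  have hinvof : ⅟(S ⊗ₖ (1 : Matrix (Fin n) (Fin n) ℂ)) = S⁻¹ ⊗ₖ 1 :=
    invOf_eq_right_inv hright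
  -- the key algebraic identity for the Schur complement
  have hkey : Γ₀ + ∑ k : Fin N, v k • Γ k
      = A₀ + ∑ l : Fin m, (p.eval ((-(τ l) : ℝ) : ℂ)) • A l := by
    have h2 : ∑ k : Fin N, v k • Γ k = ∑ l : Fin m,
        (∑ k : Fin N, v k *
          (Lagrange.basis Finset.univ x k.succ).eval ((-(τ l) : ℝ) : ℂ)) • A l := by
      simp_rw [hΓ, Finset.smul_sum, smul_smul]
      rw [Finset.sum_comm]
      exact Finset.sum_congr rfl fun l _ => (Finset.sum_smul).symm
    rw [hΓ₀, add_assoc, h2, ← Finset.sum_add_distrib]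
    congr 1
    refine Finset.sum_congr rfl fun l _ => ?_
    rw [← add_smul]
    congr 1
    have h3 := hinterp ((-(τ l) : ℝ) : ℂ)
    rw [Fin.sum_univ_succ, hpx0, one_mul] at h3
    exact h3.symm
  -- put everything together
  rw [hblock, Matrix.det_fromBlocks₁₁, hinvof, stmt_9_schurProd, hvinv]
  have hdet : (S ⊗ₖ (1 : Matrix (Fin n) (Fin n) ℂ)).det = S.det ^ n := by
    rw [Matrix.det_kronecker]; simp
  rw [hdet]
  congr 1
  rw [sub_sub, sub_sub, hkey]
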